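/- Sunflower replacement soundness: let R ⊆ (Fin (c+p) → Bool) be a Boolean relation whose first c positions are the core and last p positions the petals, let V be a type of variables, k ∈ ℕ, and let φ : V → Bool be an assignment under which at most k variables are true. Let x : Fin c → V and, for each a ∈ Fin (k+1), let y a : Fin p → V, such that for distinct a, b ∈ Fin (k+1) the ranges of y a and y b are disjoint. If for every a ∈ Fin (k+1) the tuple whose core coordinates are φ ∘ x and whose petal coordinates are φ ∘ (y a) belongs to R, then the tuple whose core coordinates are φ ∘ x and whose petal coordinates are all false belongs to R; consequently every one of these k+1 constraints also satisfies its sunflower restriction under φ. -/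
import Mathlib

theorem stmt_10 {c p : ℕ} (R : Set (Fin (c + p) → Bool)) {V : Type*} (k : ℕ)
    (φ : V → Bool) (hfin : {v : V | φ v = true}.Finite)
    (hweight : {v : V | φ v = true}.ncard ≤ k)
    (x : Fin c → V) (y : Fin (k + 1) → Fin p → V)
    (hdisj : ∀ a b : Fin (k + 1), a ≠ b → ∀ i j : Fin p, y a i ≠ y b j)
    (hcon : ∀ a : Fin (k + 1),
      Fin.append (fun i => φ (x i)) (fun j => φ (y a j)) ∈ R) :
    Fin.append (fun i => φ (x i)) (fun _ => false) ∈ R ∧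
    ∀ a : Fin (k + 1),
      Fin.append (fun i => φ (x i)) (fun j => φ (y a j)) ∈ R ∧
      Fin.append (fun i => φ (x i)) (fun _ => false) ∈ R := by
  have key : ∃ a : Fin (k+1), ∀ j, φ (y a j) = false := by
    by_contra h
    push_neg at h
    choose f hf using h
    have hinj : Function.Injective (fun a => y a (f a)) := by
      intro a b hab
      by_contra hne
      exact hdisj a b hne (f a) (f b) hab
    have hsub : Set.range (fun a => y a (f a)) ⊆ {v | φ v = true} := by
      rintro _ ⟨a, rfl⟩
      simpa [Bool.ne_false_iff] using hf a
    have hle := Set.ncard_le_ncard hsub hfin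
    rw [← Set.image_univ, Set.ncard_image_of_injective _ hinj, Set.ncard_univ] at hle
    simp [Nat.card_eq_fintype_card] at hle
    omega
  obtain ⟨a, ha⟩ := key
  have heq : (Fin.append (fun i => φ (x i)) (fun j => φ (y a j)))
      = Fin.append (fun i => φ (x i)) (fun _ => false) := by
    have : (fun j => φ (y a j)) = fun _ => false := funext ha
    rw [this]
  have h1 : Fin.append (fun i => φ (x i)) (fun _ => false) ∈ R := heq ▸ hcon a
  exact ⟨h1, fun b => ⟨hcon b, h1⟩⟩
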